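/- arXiv:1203.0431 — 2 statements merged into one kernel-verified Lean document; each statement's English description precedes it below -/
import Mathlib

section
/- With the notation above, 3·E[f_2^4 − f_5^4] − (l + 4)·E[f_3^4 − f_4^4] = 2l(l−1)(l−2)·γ_b⁴. -/
open MeasureTheory ProbabilityTheory Finset

lemma aux_abs_pow_le (x : ℝ) {n : ℕ} (hn : n ≤ 4) : |x ^ n| ≤ 1 + x ^ 4 := by
  rw [abs_pow]
  rcases le_or_gt |x| 1 with h | h
  · have h1 : |x| ^ n ≤ 1 := pow_le_one₀ (abs_nonneg x) h
    nlinarith [pow_nonneg (abs_nonneg x) 4, sq_nonneg (x^2)]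
  · have h1 : |x| ^ n ≤ |x| ^ 4 := pow_le_pow_right₀ h.le hn
    have h2 : |x| ^ 4 = x ^ 4 := by
      rw [← abs_pow]; exact abs_of_nonneg (by positivity)
    nlinarith

lemma aux_integrable_pow4 {Ω : Type*} [MeasureSpace Ω] [IsProbabilityMeasure (ℙ : Measure Ω)]
    {X : Ω → ℝ} (hm : Measurable X) (h4 : Integrable (fun ω => X ω ^ 4) ℙ)
    {n : ℕ} (hn : n ≤ 4) : Integrable (fun ω => X ω ^ n) ℙ := by
  refine Integrable.mono' ((integrable_const 1).add h4) ((hm.pow_const n).aestronglyMeasurable) ?_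
  filter_upwards with ω
  simpa using aux_abs_pow_le (X ω) hn

lemma aux_abs_mul4 (w x y z : ℝ) : |w * x * y * z| ≤ w ^ 4 + x ^ 4 + y ^ 4 + z ^ 4 := by
  have h1 : |w * x * y * z| = |w| * |x| * |y| * |z| := by rw [abs_mul, abs_mul, abs_mul]
  have hw : |w| ^ 4 = w ^ 4 := by rw [pow_abs]; exact abs_of_nonneg (by positivity)
  have hx : |x| ^ 4 = x ^ 4 := by rw [pow_abs]; exact abs_of_nonneg (by positivity)
  have hy : |y| ^ 4 = y ^ 4 := by rw [pow_abs]; exact abs_of_nonneg (by positivity)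
  have hz : |z| ^ 4 = z ^ 4 := by rw [pow_abs]; exact abs_of_nonneg (by positivity)
  rw [h1]
  nlinarith [sq_nonneg (|w| * |x| - |y| * |z|), sq_nonneg (|w| ^ 2 - |x| ^ 2),
    sq_nonneg (|y| ^ 2 - |z| ^ 2), hw, hx, hy, hz, abs_nonneg w, abs_nonneg x,
    abs_nonneg y, abs_nonneg z, sq_nonneg (|w| ^ 2 + |x| ^ 2), sq_nonneg (|y| ^ 2 + |z| ^ 2)]

lemma aux_integrable_mul4 {Ω : Type*} [MeasureSpace Ω] [IsProbabilityMeasure (ℙ : Measure Ω)]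
    {f g h k : Ω → ℝ} (hf : Measurable f) (hg : Measurable g) (hh : Measurable h)
    (hk : Measurable k)
    (hf4 : Integrable (fun ω => f ω ^ 4) ℙ) (hg4 : Integrable (fun ω => g ω ^ 4) ℙ)
    (hh4 : Integrable (fun ω => h ω ^ 4) ℙ) (hk4 : Integrable (fun ω => k ω ^ 4) ℙ) :
    Integrable (fun ω => f ω * g ω * h ω * k ω) ℙ := by
  refine Integrable.mono' (((hf4.add hg4).add hh4).add hk4)
    (((hf.mul hg).mul hh).mul hk).aestronglyMeasurable ?_
  filter_upwards with ω
  rw [Real.norm_eq_abs]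
  exact aux_abs_mul4 (f ω) (g ω) (h ω) (k ω)

lemma aux_indep_integral_prod {Ω : Type*} [MeasureSpace Ω] [IsProbabilityMeasure (ℙ : Measure Ω)]
    {ι : Type*} [DecidableEq ι] {X : ι → Ω → ℝ}
    (h : iIndepFun X ℙ) (hm : ∀ i, Measurable (X i))
    (hint : ∀ i, Integrable (X i) ℙ) (s : Finset ι) :
    Integrable (fun ω => ∏ i ∈ s, X i ω) ℙ ∧ (∫ ω, ∏ i ∈ s, X i ω) = ∏ i ∈ s, ∫ ω, X i ω := by
  induction s using Finset.induction_on with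
  | empty => simp
  | insert _ _ hi _ =>
    rename_i i s ih
    have hprodeq : (∏ j ∈ s, X j) = fun ω => ∏ j ∈ s, X j ω := by
      funext ω; simp
    have hind : IndepFun (fun ω => ∏ j ∈ s, X j ω) (X i) ℙ := by
      have h' := h.indepFun_finsetProd_of_notMem hm hi
      rwa [hprodeq] at h'
    obtain ⟨ih1, ih2⟩ := ih
    constructor
    · have := hind.symm.integrable_mul (hint i) ih1
      have heq : (fun ω => ∏ j ∈ insert i s, X j ω) = fun ω => X i ω * ∏ j ∈ s, X j ω := by
        funext ω; rw [Finset.prod_insert hi]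
      rw [heq]; exact this
    · have heq : (fun ω => ∏ j ∈ insert i s, X j ω) = fun ω => X i ω * ∏ j ∈ s, X j ω := by
        funext ω; rw [Finset.prod_insert hi]
      calc ∫ ω, ∏ j ∈ insert i s, X j ω = ∫ ω, X i ω * ∏ j ∈ s, X j ω := by rw [heq]
        _ = (∫ ω, X i ω) * ∫ ω, ∏ j ∈ s, X j ω := by
            have := hind.symm.integral_mul_eq_mul_integral (hint i).aestronglyMeasurable ih1.aestronglyMeasurable
            simpa using this
        _ = ∏ j ∈ insert i s, ∫ ω, X j ω := by rw [ih2, Finset.prod_insert hi]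


/-- first-step combination isolating the fourth moment of b. -/
theorem fourth_moment_b_first_step
    {l : ℕ} (hl : 3 ≤ l)
    {Ω : Type*} [MeasureSpace Ω] [IsProbabilityMeasure (ℙ : Measure Ω)]
    (b : Ω → ℝ) (ε : Fin l → Ω → ℝ)
    (hbmeas : Measurable b) (hεmeas : ∀ j, Measurable (ε j))
    (hindep : ProbabilityTheory.iIndepFun
      (fun i : Option (Fin l) => Option.elim i b ε) ℙ)
    (hident : ∀ j j' : Fin l, Measure.map (ε j) ℙ = Measure.map (ε j') ℙ)
    (hεmean : ∀ j, ∫ ω, ε j ω = 0)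
    (hεint4 : ∀ j, Integrable (fun ω => (ε j ω) ^ 4) ℙ)
    (hbint4 : Integrable (fun ω => (b ω) ^ 4) ℙ)
    (hbmean : ∫ ω, b ω = 0)
    (γb4 : ℝ)
    (hb4 : ∫ ω, (b ω) ^ 4 = γb4) :
    3 * (∫ ω, ((∑ j, (b ω + ε j ω) ^ 2) * (∑ j, (b ω + ε j ω)) ^ 2
                - (∑ j, (b ω + ε j ω) ^ 2) ^ 2))
      - ((l : ℝ) + 4) * (∫ ω, ((∑ j, (b ω + ε j ω) ^ 3) * (∑ j, (b ω + ε j ω))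
                - ∑ j, (b ω + ε j ω) ^ 4))
      = 2 * (l : ℝ) * ((l : ℝ) - 1) * ((l : ℝ) - 2) * γb4 := by
  classical
  set i0 : Fin l := ⟨0, by omega⟩ with hi0
  -- moments of ε are index independent
  have hIe : ∀ (j : Fin l) (p : ℕ), (∫ ω, ε j ω ^ p) = ∫ ω, ε i0 ω ^ p := by
    intro j p
    have h1 : (∫ ω, ε j ω ^ p) = ∫ x, x ^ p ∂(Measure.map (ε j) ℙ) :=
      (integral_map (hεmeas j).aemeasurable (measurable_id.pow_const p).aestronglyMeasurable).symm
    have h2 : (∫ ω, ε i0 ω ^ p) = ∫ x, x ^ p ∂(Measure.map (ε i0) ℙ) :=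
      (integral_map (hεmeas i0).aemeasurable (measurable_id.pow_const p).aestronglyMeasurable).symm
    rw [h1, h2, hident j i0]
  have hXm : ∀ o : Option (Fin l), Measurable (Option.elim o b ε) := by
    intro o; cases o with
    | none => exact hbmeas
    | some t => exact hεmeas t
  -- the key monomial computation
  have key4 : ∀ (a p q r : ℕ), a ≤ 4 ∧ p ≤ 4 ∧ q ≤ 4 ∧ r ≤ 4 → ∀ i j k : Fin l,
      i ≠ j → i ≠ k → j ≠ k →
      Integrable (fun ω => b ω ^ a * ε i ω ^ p * ε j ω ^ q * ε k ω ^ r) ℙ ∧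
      (∫ ω, b ω ^ a * ε i ω ^ p * ε j ω ^ q * ε k ω ^ r)
        = (∫ ω, b ω ^ a) * (∫ ω, ε i0 ω ^ p) * (∫ ω, ε i0 ω ^ q) * (∫ ω, ε i0 ω ^ r) := by
    intro a p q r ⟨ha, hp, hq, hr⟩ i j k hij hik hjk
    set n : Option (Fin l) → ℕ :=
      fun o => o.elim a (fun t => if t = i then p else if t = j then q else r) with hn
    set Y : Option (Fin l) → Ω → ℝ := fun o ω => (Option.elim o b ε) ω ^ n o with hY
    have hYindep : iIndepFun Y ℙ :=
      hindep.comp (fun o (x : ℝ) => x ^ n o) (fun o => measurable_id.pow_const (n o))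
    have hYm : ∀ o, Measurable (Y o) := fun o => (hXm o).pow_const (n o)
    have hYint : ∀ o, Integrable (Y o) ℙ := by
      intro o; cases o with
      | none => exact aux_integrable_pow4 hbmeas hbint4 ha
      | some t =>
        refine aux_integrable_pow4 (hεmeas t) (hεint4 t) ?_
        show (if t = i then p else if t = j then q else r) ≤ 4
        split_ifs <;> assumption
    obtain ⟨Hint, Heq⟩ := aux_indep_integral_prod hYindep hYm hYint
      ({none, some i, some j, some k} : Finset (Option (Fin l)))
    have hm1 : (none : Option (Fin l)) ∉ ({some i, some j, some k} : Finset (Option (Fin l))) := by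
      simp
    have hm2 : (some i : Option (Fin l)) ∉ ({some j, some k} : Finset (Option (Fin l))) := by
      simp [hij, hik]
    have hm3 : (some j : Option (Fin l)) ∉ ({some k} : Finset (Option (Fin l))) := by
      simp [hjk]
    simp only [Finset.prod_insert hm1, Finset.prod_insert hm2, Finset.prod_insert hm3,
      Finset.prod_singleton] at Hint Heq
    have hYnone : Y none = fun ω => b ω ^ a := rfl
    have hYi : Y (some i) = fun ω => ε i ω ^ p := by
      funext ω; simp [hY, hn]
    have hYj : Y (some j) = fun ω => ε j ω ^ q := by
      funext ω; simp [hY, hn, Ne.symm hij]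
    have hYk : Y (some k) = fun ω => ε k ω ^ r := by
      funext ω; simp [hY, hn, Ne.symm hik, Ne.symm hjk]
    simp only [hYnone, hYi, hYj, hYk] at Hint Heq
    constructor
    · have : (fun ω => b ω ^ a * ε i ω ^ p * ε j ω ^ q * ε k ω ^ r)
          = fun ω => b ω ^ a * (ε i ω ^ p * (ε j ω ^ q * ε k ω ^ r)) := by
        funext ω; ring
      rw [this]; exact Hint
    · have h1 : (∫ ω, b ω ^ a * ε i ω ^ p * ε j ω ^ q * ε k ω ^ r)
          = ∫ ω, b ω ^ a * (ε i ω ^ p * (ε j ω ^ q * ε k ω ^ r)) := by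
        congr 1; funext ω; ring
      rw [h1, Heq, hIe i p, hIe j q, hIe k r]; ring
  -- basic moments
  have hb0 : (∫ ω, b ω ^ 0) = 1 := by simp
  have hb1 : (∫ ω, b ω ^ 1) = 0 := by simpa using hbmean
  have he0 : (∫ ω, ε i0 ω ^ 0) = 1 := by simp
  have he1 : (∫ ω, ε i0 ω ^ 1) = 0 := by simpa using hεmean i0
  obtain ⟨x2, hx2⟩ : ∃ x, (∫ ω, b ω ^ 2) = x := ⟨_, rfl⟩
  obtain ⟨y2, hy2⟩ : ∃ x, (∫ ω, ε i0 ω ^ 2) = x := ⟨_, rfl⟩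
  obtain ⟨y4, hy4⟩ : ∃ x, (∫ ω, ε i0 ω ^ 4) = x := ⟨_, rfl⟩
  -- master expansion lemma
  have master : ∀ (α β γ : ℕ), α + β + γ = 4 → ∀ i j k : Fin l, i ≠ j → i ≠ k → j ≠ k →
      (∫ ω, (b ω + ε i ω) ^ α * ((b ω + ε j ω) ^ β * (b ω + ε k ω) ^ γ))
        = ∑ t ∈ Finset.range (α+1), ∑ u ∈ Finset.range (β+1), ∑ v ∈ Finset.range (γ+1),
            ((α.choose t : ℝ) * (β.choose u : ℝ) * (γ.choose v : ℝ)) *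
              ((∫ ω, b ω ^ (α - t + (β - u) + (γ - v))) * (∫ ω, ε i0 ω ^ t) *
                (∫ ω, ε i0 ω ^ u) * (∫ ω, ε i0 ω ^ v)) := by
    intro α β γ hαβγ i j k hij hik hjk
    have hexp : (fun ω => (b ω + ε i ω) ^ α * ((b ω + ε j ω) ^ β * (b ω + ε k ω) ^ γ))
        = fun ω => ∑ t ∈ Finset.range (α+1), ∑ u ∈ Finset.range (β+1), ∑ v ∈ Finset.range (γ+1),
            ((α.choose t : ℝ) * (β.choose u : ℝ) * (γ.choose v : ℝ)) *
              (b ω ^ (α - t + (β - u) + (γ - v)) * ε i ω ^ t * ε j ω ^ u * ε k ω ^ v) := by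
      funext ω
      rw [show b ω + ε i ω = ε i ω + b ω from add_comm _ _, add_pow,
          show b ω + ε j ω = ε j ω + b ω from add_comm _ _, add_pow,
          show b ω + ε k ω = ε k ω + b ω from add_comm _ _, add_pow]
      rw [Finset.sum_mul_sum, Finset.sum_mul_sum]
      simp only [Finset.mul_sum]
      refine Finset.sum_congr rfl fun t ht => Finset.sum_congr rfl fun u hu =>
        Finset.sum_congr rfl fun v hv => ?_
      ring
    have hTint : ∀ (t u v : ℕ), t ∈ Finset.range (α+1) → u ∈ Finset.range (β+1) →
        v ∈ Finset.range (γ+1) →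
        Integrable (fun ω => ((α.choose t : ℝ) * (β.choose u : ℝ) * (γ.choose v : ℝ)) *
          (b ω ^ (α - t + (β - u) + (γ - v)) * ε i ω ^ t * ε j ω ^ u * ε k ω ^ v)) ℙ := by
      intro t u v ht hu hv
      simp only [Finset.mem_range] at ht hu hv
      exact ((key4 _ _ _ _ ⟨by omega, by omega, by omega, by omega⟩ i j k hij hik hjk).1).const_mul _
    rw [hexp]
    rw [integral_finset_sum _ (fun t ht => integrable_finset_sum _ (fun u hu =>
      integrable_finset_sum _ (fun v hv => hTint t u v ht hu hv)))]
    refine Finset.sum_congr rfl fun t ht => ?_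
    rw [integral_finset_sum _ (fun u hu => integrable_finset_sum _
      (fun v hv => hTint t u v ht hu hv))]
    refine Finset.sum_congr rfl fun u hu => ?_
    rw [integral_finset_sum _ (fun v hv => hTint t u v ht hu hv)]
    refine Finset.sum_congr rfl fun v hv => ?_
    rw [integral_const_mul]
    simp only [Finset.mem_range] at ht hu hv
    rw [(key4 _ _ _ _ ⟨by omega, by omega, by omega, by omega⟩ i j k hij hik hjk).2]
  -- picking distinct indices
  have pick2 : ∀ i j : Fin l, ∃ k : Fin l, i ≠ k ∧ j ≠ k := by
    intro i j
    have hne : (({i, j} : Finset (Fin l))ᶜ).Nonempty := by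
      rw [← Finset.card_pos, Finset.card_compl]
      have h2 : ({i, j} : Finset (Fin l)).card ≤ 2 :=
        le_trans (Finset.card_insert_le _ _) (by simp)
      simp only [Fintype.card_fin]
      omega
    obtain ⟨k, hk⟩ := hne
    simp only [Finset.mem_compl, Finset.mem_insert, Finset.mem_singleton, not_or] at hk
    exact ⟨k, fun h => hk.1 h.symm, fun h => hk.2 h.symm⟩
  have pick3 : ∀ i : Fin l, ∃ j k : Fin l, i ≠ j ∧ i ≠ k ∧ j ≠ k := by
    intro i
    obtain ⟨j, hij, -⟩ := pick2 i i
    obtain ⟨k, hik, hjk⟩ := pick2 i j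
    exact ⟨j, k, hij, hik, hjk⟩
  -- the four basic expectations
  have lemA : ∀ i j k : Fin l, i ≠ j → i ≠ k → j ≠ k →
      (∫ ω, (b ω + ε i ω) ^ 2 * ((b ω + ε j ω) * (b ω + ε k ω))) = γb4 + x2 * y2 := by
    intro i j k hij hik hjk
    rw [show (fun ω => (b ω + ε i ω) ^ 2 * ((b ω + ε j ω) * (b ω + ε k ω)))
        = fun ω => (b ω + ε i ω) ^ 2 * ((b ω + ε j ω) ^ 1 * (b ω + ε k ω) ^ 1) from
      funext fun ω => by ring]
    rw [master 2 1 1 (by norm_num) i j k hij hik hjk]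
    norm_num [Finset.sum_range_succ, Nat.choose, hb0, hb1, he0, he1, hb4, hx2, hy2, hy4, hbmean, hεmean]
    try ring
  have lemB : ∀ i j : Fin l, i ≠ j →
      (∫ ω, (b ω + ε i ω) ^ 3 * (b ω + ε j ω)) = γb4 + 3 * (x2 * y2) := by
    intro i j hij
    obtain ⟨k, hik, hjk⟩ := pick2 i j
    rw [show (fun ω => (b ω + ε i ω) ^ 3 * (b ω + ε j ω))
        = fun ω => (b ω + ε i ω) ^ 3 * ((b ω + ε j ω) ^ 1 * (b ω + ε k ω) ^ 0) from
      funext fun ω => by ring]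
    rw [master 3 1 0 (by norm_num) i j k hij hik hjk]
    norm_num [Finset.sum_range_succ, Nat.choose, hb0, hb1, he0, he1, hb4, hx2, hy2, hy4, hbmean, hεmean]
    try ring
  have lemC : ∀ i j : Fin l, i ≠ j →
      (∫ ω, (b ω + ε i ω) ^ 2 * (b ω + ε j ω) ^ 2)
        = γb4 + 2 * (x2 * y2) + y2 ^ 2 := by
    intro i j hij
    obtain ⟨k, hik, hjk⟩ := pick2 i j
    rw [show (fun ω => (b ω + ε i ω) ^ 2 * (b ω + ε j ω) ^ 2)
        = fun ω => (b ω + ε i ω) ^ 2 * ((b ω + ε j ω) ^ 2 * (b ω + ε k ω) ^ 0) from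
      funext fun ω => by ring]
    rw [master 2 2 0 (by norm_num) i j k hij hik hjk]
    norm_num [Finset.sum_range_succ, Nat.choose, hb0, hb1, he0, he1, hb4, hx2, hy2, hy4, hbmean, hεmean]
    try ring
  have lemD : ∀ i : Fin l,
      (∫ ω, (b ω + ε i ω) ^ 4) = γb4 + 6 * (x2 * y2) + y4 := by
    intro i
    obtain ⟨j, k, hij, hik, hjk⟩ := pick3 i
    rw [show (fun ω => (b ω + ε i ω) ^ 4)
        = fun ω => (b ω + ε i ω) ^ 4 * ((b ω + ε j ω) ^ 0 * (b ω + ε k ω) ^ 0) from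
      funext fun ω => by ring]
    rw [master 4 0 0 (by norm_num) i j k hij hik hjk]
    norm_num [Finset.sum_range_succ, Nat.choose, hb0, hb1, he0, he1, hb4, hx2, hy2, hy4, hbmean, hεmean]
    try ring
  -- integrability of e-products
  have he4 : ∀ t : Fin l, Integrable (fun ω => (b ω + ε t ω) ^ 4) ℙ := by
    intro t
    refine Integrable.mono' ((hbint4.add (hεint4 t)).const_mul 8)
      ((hbmeas.add (hεmeas t)).pow_const 4).aestronglyMeasurable ?_
    filter_upwards with ω
    rw [Real.norm_eq_abs, abs_of_nonneg (by positivity)]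
    show (b ω + ε t ω) ^ 4 ≤ 8 * (b ω ^ 4 + ε t ω ^ 4)
    nlinarith [sq_nonneg (b ω - ε t ω), sq_nonneg (b ω + ε t ω),
      sq_nonneg (b ω ^ 2 - ε t ω ^ 2), sq_nonneg (b ω ^ 2 + ε t ω ^ 2),
      sq_nonneg (b ω * ε t ω), sq_nonneg ((b ω + ε t ω) ^ 2 - 2 * b ω ^ 2 - 2 * ε t ω ^ 2)]
  have intP1 : ∀ i j k : Fin l,
      Integrable (fun ω => (b ω + ε i ω) ^ 2 * ((b ω + ε j ω) * (b ω + ε k ω))) ℙ := by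
    intro i j k
    have h := aux_integrable_mul4 (hbmeas.add (hεmeas i)) (hbmeas.add (hεmeas i))
      (hbmeas.add (hεmeas j)) (hbmeas.add (hεmeas k)) (he4 i) (he4 i) (he4 j) (he4 k)
    exact h.congr (Filter.Eventually.of_forall fun ω => by simp only [Pi.add_apply]; ring)
  have intP2 : ∀ i j : Fin l,
      Integrable (fun ω => (b ω + ε i ω) ^ 2 * (b ω + ε j ω) ^ 2) ℙ := by
    intro i j
    have h := aux_integrable_mul4 (hbmeas.add (hεmeas i)) (hbmeas.add (hεmeas i))
      (hbmeas.add (hεmeas j)) (hbmeas.add (hεmeas j)) (he4 i) (he4 i) (he4 j) (he4 j)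
    exact h.congr (Filter.Eventually.of_forall fun ω => by simp only [Pi.add_apply]; ring)
  have intP3 : ∀ i j : Fin l,
      Integrable (fun ω => (b ω + ε i ω) ^ 3 * (b ω + ε j ω)) ℙ := by
    intro i j
    have h := aux_integrable_mul4 (hbmeas.add (hεmeas i)) (hbmeas.add (hεmeas i))
      (hbmeas.add (hεmeas i)) (hbmeas.add (hεmeas j)) (he4 i) (he4 i) (he4 i) (he4 j)
    exact h.congr (Filter.Eventually.of_forall fun ω => by simp only [Pi.add_apply]; ring)
  -- pattern values
  have hF1 : ∀ i j k : Fin l,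
      (∫ ω, (b ω + ε i ω) ^ 2 * ((b ω + ε j ω) * (b ω + ε k ω)))
        = if i = j then (if i = k then γb4 + 6 * (x2 * y2) + y4 else γb4 + 3 * (x2 * y2))
          else if i = k then γb4 + 3 * (x2 * y2)
          else if j = k then γb4 + 2 * (x2 * y2) + y2 ^ 2
          else γb4 + x2 * y2 := by
    intro i j k
    by_cases h1 : i = j
    · subst h1
      by_cases h2 : i = k
      · subst h2
        simp only [if_pos rfl]
        rw [show (fun ω => (b ω + ε i ω) ^ 2 * ((b ω + ε i ω) * (b ω + ε i ω)))
            = fun ω => (b ω + ε i ω) ^ 4 from funext fun ω => by ring]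
        exact lemD i
      · simp only [if_pos rfl, if_neg h2]
        rw [show (fun ω => (b ω + ε i ω) ^ 2 * ((b ω + ε i ω) * (b ω + ε k ω)))
            = fun ω => (b ω + ε i ω) ^ 3 * (b ω + ε k ω) from funext fun ω => by ring]
        exact lemB i k h2
    · by_cases h2 : i = k
      · subst h2
        simp only [if_neg h1, if_pos rfl]
        rw [show (fun ω => (b ω + ε i ω) ^ 2 * ((b ω + ε j ω) * (b ω + ε i ω)))
            = fun ω => (b ω + ε i ω) ^ 3 * (b ω + ε j ω) from funext fun ω => by ring]
        exact lemB i j h1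
      · by_cases h3 : j = k
        · subst h3
          simp only [if_neg h1, if_neg h2, if_pos rfl]
          rw [show (fun ω => (b ω + ε i ω) ^ 2 * ((b ω + ε j ω) * (b ω + ε j ω)))
              = fun ω => (b ω + ε i ω) ^ 2 * (b ω + ε j ω) ^ 2 from funext fun ω => by ring]
          exact lemC i j h1
        · simp only [if_neg h1, if_neg h2, if_neg h3]
          exact lemA i j k h1 h2 h3
  have hF2 : ∀ i j : Fin l,
      (∫ ω, (b ω + ε i ω) ^ 2 * (b ω + ε j ω) ^ 2)
        = if i = j then γb4 + 6 * (x2 * y2) + y4 else γb4 + 2 * (x2 * y2) + y2 ^ 2 := by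
    intro i j
    by_cases h1 : i = j
    · subst h1
      simp only [if_pos rfl]
      rw [show (fun ω => (b ω + ε i ω) ^ 2 * (b ω + ε i ω) ^ 2)
          = fun ω => (b ω + ε i ω) ^ 4 from funext fun ω => by ring]
      exact lemD i
    · simp only [if_neg h1]
      exact lemC i j h1
  have hF3 : ∀ i j : Fin l,
      (∫ ω, (b ω + ε i ω) ^ 3 * (b ω + ε j ω))
        = if i = j then γb4 + 6 * (x2 * y2) + y4 else γb4 + 3 * (x2 * y2) := by
    intro i j
    by_cases h1 : i = j
    · subst h1
      simp only [if_pos rfl]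
      rw [show (fun ω => (b ω + ε i ω) ^ 3 * (b ω + ε i ω))
          = fun ω => (b ω + ε i ω) ^ 4 from funext fun ω => by ring]
      exact lemD i
    · simp only [if_neg h1]
      exact lemB i j h1
  -- counting helpers
  have hsum1 : ∀ (x y : ℝ) (i : Fin l),
      (∑ k : Fin l, if i = k then x else y) = x + ((l : ℝ) - 1) * y := by
    intro x y i
    have h1 : (∑ k : Fin l, if i = k then x else y)
        = ∑ k : Fin l, (y + if i = k then x - y else 0) := by
      refine Finset.sum_congr rfl fun k _ => ?_
      by_cases h : i = k <;> simp [h]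
    rw [h1, Finset.sum_add_distrib, Finset.sum_const, Finset.sum_ite_eq]
    simp [Finset.card_univ, nsmul_eq_mul]
    ring
  have hsum2 : ∀ (x y z : ℝ) (i j : Fin l), i ≠ j →
      (∑ k : Fin l, if i = k then x else if j = k then y else z)
        = x + y + ((l : ℝ) - 2) * z := by
    intro x y z i j hij
    have h1 : ∀ k : Fin l, (if i = k then x else if j = k then y else z)
        = z + ((if i = k then x - z else 0) + (if j = k then y - z else 0)) := by
      intro k
      by_cases h : i = k
      · have h' : ¬ (j = k) := fun hh => hij (h.trans hh.symm)
        simp [h, h']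
      · by_cases h' : j = k <;> simp [h, h']
    rw [Finset.sum_congr rfl fun k _ => h1 k, Finset.sum_add_distrib, Finset.sum_add_distrib,
      Finset.sum_const, Finset.sum_ite_eq, Finset.sum_ite_eq]
    simp [Finset.card_univ, nsmul_eq_mul]
    ring
  -- expand the sums of products pointwise
  have hre1 : (fun ω => (∑ j, (b ω + ε j ω) ^ 2) * (∑ j, (b ω + ε j ω)) ^ 2)
      = fun ω => ∑ i, ∑ j, ∑ k, (b ω + ε i ω) ^ 2 * ((b ω + ε j ω) * (b ω + ε k ω)) := by
    funext ω
    rw [pow_two, Finset.sum_mul_sum, Finset.sum_mul]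
    refine Finset.sum_congr rfl fun i _ => ?_
    rw [Finset.mul_sum]
    exact Finset.sum_congr rfl fun j _ => Finset.mul_sum _ _ _
  have hre2 : (fun ω => (∑ j, (b ω + ε j ω) ^ 2) ^ 2)
      = fun ω => ∑ i, ∑ j, (b ω + ε i ω) ^ 2 * (b ω + ε j ω) ^ 2 := by
    funext ω
    rw [pow_two, Finset.sum_mul_sum]
  have hre3 : (fun ω => (∑ j, (b ω + ε j ω) ^ 3) * (∑ j, (b ω + ε j ω)))
      = fun ω => ∑ i, ∑ j, (b ω + ε i ω) ^ 3 * (b ω + ε j ω) := by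
    funext ω
    rw [Finset.sum_mul_sum]
  -- integrability of the four big functions
  have IT1 : Integrable (fun ω => (∑ j, (b ω + ε j ω) ^ 2) * (∑ j, (b ω + ε j ω)) ^ 2) ℙ := by
    rw [hre1]
    exact integrable_finset_sum _ fun i _ => integrable_finset_sum _ fun j _ =>
      integrable_finset_sum _ fun k _ => intP1 i j k
  have IT2 : Integrable (fun ω => (∑ j, (b ω + ε j ω) ^ 2) ^ 2) ℙ := by
    rw [hre2]
    exact integrable_finset_sum _ fun i _ => integrable_finset_sum _ fun j _ => intP2 i j
  have IT3 : Integrable (fun ω => (∑ j, (b ω + ε j ω) ^ 3) * (∑ j, (b ω + ε j ω))) ℙ := by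
    rw [hre3]
    exact integrable_finset_sum _ fun i _ => integrable_finset_sum _ fun j _ => intP3 i j
  have IT4 : Integrable (fun ω => ∑ j, (b ω + ε j ω) ^ 4) ℙ :=
    integrable_finset_sum _ fun j _ => he4 j
  -- values of the four big integrals
  have hv1 : (∫ ω, (∑ j, (b ω + ε j ω) ^ 2) * (∑ j, (b ω + ε j ω)) ^ 2)
      = (l : ℝ) * (((γb4 + 6 * (x2 * y2) + y4) + ((l : ℝ) - 1) * (γb4 + 3 * (x2 * y2)))
          + ((l : ℝ) - 1) * ((γb4 + 3 * (x2 * y2)) + (γb4 + 2 * (x2 * y2) + y2 ^ 2)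
            + ((l : ℝ) - 2) * (γb4 + x2 * y2))) := by
    rw [hre1]
    rw [integral_finset_sum _ (fun i _ => integrable_finset_sum _ fun j _ =>
      integrable_finset_sum _ fun k _ => intP1 i j k)]
    have innerval : ∀ i : Fin l,
        (∫ ω, ∑ j, ∑ k, (b ω + ε i ω) ^ 2 * ((b ω + ε j ω) * (b ω + ε k ω)))
          = ((γb4 + 6 * (x2 * y2) + y4) + ((l : ℝ) - 1) * (γb4 + 3 * (x2 * y2)))
            + ((l : ℝ) - 1) * ((γb4 + 3 * (x2 * y2)) + (γb4 + 2 * (x2 * y2) + y2 ^ 2)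
              + ((l : ℝ) - 2) * (γb4 + x2 * y2)) := by
      intro i
      rw [integral_finset_sum _ (fun j _ => integrable_finset_sum _ fun k _ => intP1 i j k)]
      have hj : ∀ j : Fin l,
          (∫ ω, ∑ k, (b ω + ε i ω) ^ 2 * ((b ω + ε j ω) * (b ω + ε k ω)))
            = if i = j then (γb4 + 6 * (x2 * y2) + y4) + ((l : ℝ) - 1) * (γb4 + 3 * (x2 * y2))
              else (γb4 + 3 * (x2 * y2)) + (γb4 + 2 * (x2 * y2) + y2 ^ 2)
                + ((l : ℝ) - 2) * (γb4 + x2 * y2) := by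
        intro j
        rw [integral_finset_sum _ (fun k _ => intP1 i j k)]
        rw [Finset.sum_congr rfl fun k _ => hF1 i j k]
        by_cases h : i = j
        · simp only [if_pos h]
          exact hsum1 _ _ i
        · simp only [if_neg h]
          exact hsum2 _ _ _ i j h
      rw [Finset.sum_congr rfl fun j _ => hj j]
      exact hsum1 _ _ i
    rw [Finset.sum_congr rfl fun i _ => innerval i, Finset.sum_const]
    simp [Finset.card_univ, nsmul_eq_mul]
    try ring
  have hv2 : (∫ ω, (∑ j, (b ω + ε j ω) ^ 2) ^ 2)
      = (l : ℝ) * ((γb4 + 6 * (x2 * y2) + y4)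
          + ((l : ℝ) - 1) * (γb4 + 2 * (x2 * y2) + y2 ^ 2)) := by
    rw [hre2]
    rw [integral_finset_sum _ (fun i _ => integrable_finset_sum _ fun j _ => intP2 i j)]
    have innerval : ∀ i : Fin l,
        (∫ ω, ∑ j, (b ω + ε i ω) ^ 2 * (b ω + ε j ω) ^ 2)
          = (γb4 + 6 * (x2 * y2) + y4) + ((l : ℝ) - 1) * (γb4 + 2 * (x2 * y2) + y2 ^ 2) := by
      intro i
      rw [integral_finset_sum _ (fun j _ => intP2 i j)]
      rw [Finset.sum_congr rfl fun j _ => hF2 i j]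
      exact hsum1 _ _ i
    rw [Finset.sum_congr rfl fun i _ => innerval i, Finset.sum_const]
    simp [Finset.card_univ, nsmul_eq_mul]
    try ring
  have hv3 : (∫ ω, (∑ j, (b ω + ε j ω) ^ 3) * (∑ j, (b ω + ε j ω)))
      = (l : ℝ) * ((γb4 + 6 * (x2 * y2) + y4)
          + ((l : ℝ) - 1) * (γb4 + 3 * (x2 * y2))) := by
    rw [hre3]
    rw [integral_finset_sum _ (fun i _ => integrable_finset_sum _ fun j _ => intP3 i j)]
    have innerval : ∀ i : Fin l,
        (∫ ω, ∑ j, (b ω + ε i ω) ^ 3 * (b ω + ε j ω))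
          = (γb4 + 6 * (x2 * y2) + y4) + ((l : ℝ) - 1) * (γb4 + 3 * (x2 * y2)) := by
      intro i
      rw [integral_finset_sum _ (fun j _ => intP3 i j)]
      rw [Finset.sum_congr rfl fun j _ => hF3 i j]
      exact hsum1 _ _ i
    rw [Finset.sum_congr rfl fun i _ => innerval i, Finset.sum_const]
    simp [Finset.card_univ, nsmul_eq_mul]
    try ring
  have hv4 : (∫ ω, ∑ j, (b ω + ε j ω) ^ 4)
      = (l : ℝ) * (γb4 + 6 * (x2 * y2) + y4) := by
    rw [integral_finset_sum _ (fun j _ => he4 j)]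
    rw [Finset.sum_congr rfl fun j _ => lemD j, Finset.sum_const]
    simp [Finset.card_univ, nsmul_eq_mul]
    try ring
  -- final assembly
  have split1 : (∫ ω, ((∑ j, (b ω + ε j ω) ^ 2) * (∑ j, (b ω + ε j ω)) ^ 2
        - (∑ j, (b ω + ε j ω) ^ 2) ^ 2))
      = (∫ ω, (∑ j, (b ω + ε j ω) ^ 2) * (∑ j, (b ω + ε j ω)) ^ 2)
        - ∫ ω, (∑ j, (b ω + ε j ω) ^ 2) ^ 2 := integral_sub IT1 IT2
  have split2 : (∫ ω, ((∑ j, (b ω + ε j ω) ^ 3) * (∑ j, (b ω + ε j ω))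
        - ∑ j, (b ω + ε j ω) ^ 4))
      = (∫ ω, (∑ j, (b ω + ε j ω) ^ 3) * (∑ j, (b ω + ε j ω)))
        - ∫ ω, ∑ j, (b ω + ε j ω) ^ 4 := integral_sub IT3 IT4
  rw [split1, split2, hv1, hv2, hv3, hv4]
  ring
end

section
/- With f_3^4 and f_4^4 as above, E[f_3^4 − f_4^4] = (l² − l)·γ_b⁴ + 3(l² − l)·γ_b²γ_ε², and hence γ_b⁴ = (E[f_3^4] − E[f_4^4])/(l(l−1)) − 3γ_b²γ_ε² for l ≥ 2. -/
open MeasureTheory ProbabilityTheory Finset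

private lemma abs_cube_mul_le (x y : ℝ) : |x ^ 3 * y| ≤ x ^ 4 + y ^ 4 := by
  have ha : (0:ℝ) ≤ |x| := abs_nonneg x
  have hb : (0:ℝ) ≤ |y| := abs_nonneg y
  have h1 : |x ^ 3 * y| = |x| ^ 3 * |y| := by rw [abs_mul, abs_pow]
  have h2 : x ^ 4 = |x| ^ 4 := by rw [← abs_pow, abs_of_nonneg (by positivity)]
  have h3 : y ^ 4 = |y| ^ 4 := by rw [← abs_pow, abs_of_nonneg (by positivity)]
  rw [h1, h2, h3]
  nlinarith [mul_nonneg (mul_nonneg ha ha) (sq_nonneg (|x| - |y|)),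
    mul_nonneg (mul_nonneg ha hb) (sq_nonneg (|x| - |y|)),
    mul_nonneg (mul_nonneg hb hb) (sq_nonneg (|x| - |y|))]

private lemma abs_sq_mul_sq_le (x y : ℝ) : |x ^ 2 * y ^ 2| ≤ x ^ 4 + y ^ 4 := by
  rw [abs_of_nonneg (by positivity)]
  nlinarith [sq_nonneg (x ^ 2 - y ^ 2)]

private lemma add_pow_four_le (x y : ℝ) : (x + y) ^ 4 ≤ 8 * (x ^ 4 + y ^ 4) := by
  nlinarith [sq_nonneg (x - y), sq_nonneg (x + y), sq_nonneg (x ^ 2 - y ^ 2),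
    sq_nonneg (x * y), sq_nonneg x, sq_nonneg y, sq_nonneg (x ^ 2 + y ^ 2)]

private lemma integrable_cube_mul {Ω : Type*} [MeasureSpace Ω]
    [IsProbabilityMeasure (ℙ : Measure Ω)]
    {X Y : Ω → ℝ} (hX : Measurable X) (hY : Measurable Y)
    (hX4 : Integrable (fun ω => X ω ^ 4) ℙ) (hY4 : Integrable (fun ω => Y ω ^ 4) ℙ) :
    Integrable (fun ω => X ω ^ 3 * Y ω) ℙ := by
  refine (hX4.add hY4).mono' ((hX.pow_const 3).mul hY).aestronglyMeasurable
    (ae_of_all _ fun ω => ?_)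
  simpa [Real.norm_eq_abs, abs_mul, abs_pow] using abs_cube_mul_le (X ω) (Y ω)

private lemma integrable_sq_mul_sq {Ω : Type*} [MeasureSpace Ω]
    [IsProbabilityMeasure (ℙ : Measure Ω)]
    {X Y : Ω → ℝ} (hX : Measurable X) (hY : Measurable Y)
    (hX4 : Integrable (fun ω => X ω ^ 4) ℙ) (hY4 : Integrable (fun ω => Y ω ^ 4) ℙ) :
    Integrable (fun ω => X ω ^ 2 * Y ω ^ 2) ℙ := by
  refine (hX4.add hY4).mono' ((hX.pow_const 2).mul (hY.pow_const 2)).aestronglyMeasurable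
    (ae_of_all _ fun ω => ?_)
  simpa [Real.norm_eq_abs, abs_mul, abs_pow, sq_abs] using abs_sq_mul_sq_le (X ω) (Y ω)

private lemma integrable_add_pow_four {Ω : Type*} [MeasureSpace Ω]
    [IsProbabilityMeasure (ℙ : Measure Ω)]
    {X Y : Ω → ℝ} (hX : Measurable X) (hY : Measurable Y)
    (hX4 : Integrable (fun ω => X ω ^ 4) ℙ) (hY4 : Integrable (fun ω => Y ω ^ 4) ℙ) :
    Integrable (fun ω => (X ω + Y ω) ^ 4) ℙ := by
  refine ((hX4.add hY4).const_mul 8).mono' ((hX.add hY).pow_const 4).aestronglyMeasurable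
    (ae_of_all _ fun ω => ?_)
  have h1 : ‖(X ω + Y ω) ^ 4‖ = (X ω + Y ω) ^ 4 := by
    rw [Real.norm_eq_abs, abs_of_nonneg (by positivity)]
  rw [h1]
  exact add_pow_four_le (X ω) (Y ω)

/-- E[f_3^4 − f_4^4] identity and the resulting formula for γ_b⁴. -/
theorem fourth_moment_b_from_f34_f44
    {l : ℕ} (hl : 2 ≤ l)
    {Ω : Type*} [MeasureSpace Ω] [IsProbabilityMeasure (ℙ : Measure Ω)]
    (b : Ω → ℝ) (ε : Fin l → Ω → ℝ)
    (hbmeas : Measurable b) (hεmeas : ∀ j, Measurable (ε j))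
    (hindep : ProbabilityTheory.iIndepFun
      (fun i : Option (Fin l) => Option.elim i b ε) ℙ)
    (hident : ∀ j j' : Fin l, Measure.map (ε j) ℙ = Measure.map (ε j') ℙ)
    (hεmean : ∀ j, ∫ ω, ε j ω = 0)
    (hεint4 : ∀ j, Integrable (fun ω => (ε j ω) ^ 4) ℙ)
    (hbint4 : Integrable (fun ω => (b ω) ^ 4) ℙ)
    (hbmean : ∫ ω, b ω = 0)
    (γb2 γb4 γε2 : ℝ)
    (hb2 : ∫ ω, (b ω) ^ 2 = γb2) (hb4 : ∫ ω, (b ω) ^ 4 = γb4)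
    (hε2 : ∀ j, ∫ ω, (ε j ω) ^ 2 = γε2) :
    (∫ ω, ((∑ j, (b ω + ε j ω) ^ 3) * (∑ j, (b ω + ε j ω))
            - ∑ j, (b ω + ε j ω) ^ 4)
        = ((l : ℝ) ^ 2 - (l : ℝ)) * γb4
          + 3 * ((l : ℝ) ^ 2 - (l : ℝ)) * γb2 * γε2) ∧
    (γb4 = ((∫ ω, (∑ j, (b ω + ε j ω) ^ 3) * (∑ j, (b ω + ε j ω)))
              - ∫ ω, ∑ j, (b ω + ε j ω) ^ 4) / ((l : ℝ) * ((l : ℝ) - 1))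
            - 3 * γb2 * γε2) := by
  classical
  -- measurability of the indexed family
  have hm : ∀ i : Option (Fin l),
      Measurable ((fun i : Option (Fin l) => Option.elim i b ε) i) := by
    rintro (_ | j)
    · exact hbmeas
    · exact hεmeas j
  have hemeas : ∀ j : Fin l, Measurable (fun ω => b ω + ε j ω) :=
    fun j => hbmeas.add (hεmeas j)
  -- fourth powers of e_j are integrable
  have he4 : ∀ j : Fin l, Integrable (fun ω => (b ω + ε j ω) ^ 4) ℙ :=
    fun j => integrable_add_pow_four hbmeas (hεmeas j) hbint4 (hεint4 j)
  -- products e_j^3 * e_k are integrable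
  have hintgr : ∀ j k : Fin l,
      Integrable (fun ω => (b ω + ε j ω) ^ 3 * (b ω + ε k ω)) ℙ :=
    fun j k => integrable_cube_mul (hemeas j) (hemeas k) (he4 j) (he4 k)
  -- pairwise independence of b and ε j
  have hIbe : ∀ j : Fin l, IndepFun b (ε j) ℙ :=
    fun j => hindep.indepFun (by simp : (none : Option (Fin l)) ≠ some j)
  -- independence of e_j^3 and ε k for k ≠ j
  have hIpair : ∀ j k : Fin l, k ≠ j →
      IndepFun (fun ω => (b ω + ε j ω) ^ 3) (ε k) ℙ := by
    intro j k hkj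
    have h := hindep.indepFun_prodMk hm none (some j) (some k)
      (by simp) (by simpa using fun h => hkj h.symm)
    exact h.comp (show Measurable (fun p : ℝ × ℝ => (p.1 + p.2) ^ 3) by fun_prop)
      measurable_id
  -- key computation
  have key : ∀ j k : Fin l, k ≠ j →
      ∫ ω, (b ω + ε j ω) ^ 3 * (b ω + ε k ω) = γb4 + 3 * γb2 * γε2 := by
    intro j k hkj
    -- split e_k = b + ε_k
    have hInt1 : Integrable (fun ω => (b ω + ε j ω) ^ 3 * b ω) ℙ :=
      integrable_cube_mul (hemeas j) hbmeas (he4 j) hbint4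
    have hInt2 : Integrable (fun ω => (b ω + ε j ω) ^ 3 * ε k ω) ℙ :=
      integrable_cube_mul (hemeas j) (hεmeas k) (he4 j) (hεint4 k)
    have hsplit : (∫ ω, (b ω + ε j ω) ^ 3 * (b ω + ε k ω))
        = (∫ ω, (b ω + ε j ω) ^ 3 * b ω) + ∫ ω, (b ω + ε j ω) ^ 3 * ε k ω := by
      rw [← integral_add hInt1 hInt2]
      congr 1 with ω
      ring
    have hz : (∫ ω, (b ω + ε j ω) ^ 3 * ε k ω) = 0 := by
      have h0 : (∫ ω, (b ω + ε j ω) ^ 3 * ε k ω)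
          = (∫ ω, (b ω + ε j ω) ^ 3) * ∫ ω, ε k ω :=
        (hIpair j k hkj).integral_fun_mul_eq_mul_integral
          ((hemeas j).pow_const 3).aestronglyMeasurable
          (hεmeas k).aestronglyMeasurable
      rw [h0, hεmean k, mul_zero]
    -- expand (b + ε_j)^3 * b
    have hIb3ε : Integrable (fun ω => b ω ^ 3 * ε j ω) ℙ :=
      integrable_cube_mul hbmeas (hεmeas j) hbint4 (hεint4 j)
    have hIb2ε2 : Integrable (fun ω => b ω ^ 2 * ε j ω ^ 2) ℙ :=
      integrable_sq_mul_sq hbmeas (hεmeas j) hbint4 (hεint4 j)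
    have hIbε3 : Integrable (fun ω => ε j ω ^ 3 * b ω) ℙ :=
      integrable_cube_mul (hεmeas j) hbmeas (hεint4 j) hbint4
    have hmain : (∫ ω, (b ω + ε j ω) ^ 3 * b ω)
        = (∫ ω, b ω ^ 4) + 3 * (∫ ω, b ω ^ 3 * ε j ω)
          + 3 * (∫ ω, b ω ^ 2 * ε j ω ^ 2) + ∫ ω, ε j ω ^ 3 * b ω := by
      have e1 : (fun ω => (b ω + ε j ω) ^ 3 * b ω)
          = fun ω => b ω ^ 4 + 3 * (b ω ^ 3 * ε j ω) + 3 * (b ω ^ 2 * ε j ω ^ 2)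
            + ε j ω ^ 3 * b ω := by
        funext ω; ring
      have i12 : Integrable (fun ω => b ω ^ 4 + 3 * (b ω ^ 3 * ε j ω)) ℙ := by
        exact hbint4.add (hIb3ε.const_mul 3)
      have i123 : Integrable (fun ω => b ω ^ 4 + 3 * (b ω ^ 3 * ε j ω)
          + 3 * (b ω ^ 2 * ε j ω ^ 2)) ℙ := by
        exact i12.add (hIb2ε2.const_mul 3)
      rw [e1, integral_add i123 hIbε3, integral_add i12 (hIb2ε2.const_mul 3),
        integral_add hbint4 (hIb3ε.const_mul 3), integral_const_mul, integral_const_mul]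
    -- each cross term vanishes or factorizes
    have hz1 : (∫ ω, b ω ^ 3 * ε j ω) = 0 := by
      have h0 : (∫ ω, b ω ^ 3 * ε j ω) = (∫ ω, b ω ^ 3) * ∫ ω, ε j ω :=
        ((hIbe j).comp (measurable_id.pow_const 3) measurable_id).integral_fun_mul_eq_mul_integral
          (hbmeas.pow_const 3).aestronglyMeasurable (hεmeas j).aestronglyMeasurable
      rw [h0, hεmean j, mul_zero]
    have hz2 : (∫ ω, b ω ^ 2 * ε j ω ^ 2) = γb2 * γε2 := by
      have h0 : (∫ ω, b ω ^ 2 * ε j ω ^ 2) = (∫ ω, b ω ^ 2) * ∫ ω, ε j ω ^ 2 :=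
        ((hIbe j).comp (measurable_id.pow_const 2) (measurable_id.pow_const 2)).integral_fun_mul_eq_mul_integral
          (hbmeas.pow_const 2).aestronglyMeasurable
          ((hεmeas j).pow_const 2).aestronglyMeasurable
      rw [h0, hb2, hε2 j]
    have hz3 : (∫ ω, ε j ω ^ 3 * b ω) = 0 := by
      have h0 : (∫ ω, ε j ω ^ 3 * b ω) = (∫ ω, ε j ω ^ 3) * ∫ ω, b ω :=
        ((hIbe j).symm.comp (measurable_id.pow_const 3) measurable_id).integral_fun_mul_eq_mul_integral
          ((hεmeas j).pow_const 3).aestronglyMeasurable hbmeas.aestronglyMeasurable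
      rw [h0, hbmean, mul_zero]
    rw [hsplit, hz, hmain, hz1, hz2, hz3, hb4]
    ring
  -- pointwise rewriting of the integrand
  have hpt : ∀ ω : Ω, (∑ j, (b ω + ε j ω) ^ 3) * (∑ j, (b ω + ε j ω))
      - ∑ j, (b ω + ε j ω) ^ 4
      = ∑ j, ∑ k ∈ univ.erase j, (b ω + ε j ω) ^ 3 * (b ω + ε k ω) := by
    intro ω
    rw [Finset.sum_mul_sum, ← Finset.sum_sub_distrib]
    refine Finset.sum_congr rfl fun j _ => ?_
    rw [← Finset.sum_erase_add _ _ (mem_univ j)]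
    ring
  -- the first identity
  have hl1 : (1 : ℕ) ≤ l := le_trans one_le_two hl
  have hcast : ((l - 1 : ℕ) : ℝ) = (l : ℝ) - 1 := by
    push_cast [Nat.cast_sub hl1]; ring
  have hmain1 : (∫ ω, ((∑ j, (b ω + ε j ω) ^ 3) * (∑ j, (b ω + ε j ω))
        - ∑ j, (b ω + ε j ω) ^ 4))
      = ((l : ℝ) ^ 2 - (l : ℝ)) * γb4 + 3 * ((l : ℝ) ^ 2 - (l : ℝ)) * γb2 * γε2 := by
    have h1 : (∫ ω, ((∑ j, (b ω + ε j ω) ^ 3) * (∑ j, (b ω + ε j ω))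
          - ∑ j, (b ω + ε j ω) ^ 4))
        = ∫ ω, ∑ j, ∑ k ∈ univ.erase j, (b ω + ε j ω) ^ 3 * (b ω + ε k ω) :=
      integral_congr_ae (ae_of_all _ hpt)
    rw [h1, integral_finset_sum _ (fun j _ =>
      integrable_finset_sum _ fun k _ => hintgr j k)]
    have h2 : ∀ j : Fin l, (∫ ω, ∑ k ∈ univ.erase j, (b ω + ε j ω) ^ 3 * (b ω + ε k ω))
        = ∑ k ∈ univ.erase j, ∫ ω, (b ω + ε j ω) ^ 3 * (b ω + ε k ω) :=
      fun j => integral_finset_sum _ fun k _ => hintgr j k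
    calc (∑ j, ∫ ω, ∑ k ∈ univ.erase j, (b ω + ε j ω) ^ 3 * (b ω + ε k ω))
        = ∑ j : Fin l, ∑ k ∈ univ.erase j, (γb4 + 3 * γb2 * γε2) := by
          refine Finset.sum_congr rfl fun j _ => ?_
          rw [h2 j]
          exact Finset.sum_congr rfl fun k hk => key j k (Finset.mem_erase.mp hk).1
      _ = (l : ℝ) * (((l - 1 : ℕ) : ℝ) * (γb4 + 3 * γb2 * γε2)) := by
          have hinner : ∀ j : Fin l, ∑ k ∈ univ.erase j, (γb4 + 3 * γb2 * γε2)
              = ((l - 1 : ℕ) : ℝ) * (γb4 + 3 * γb2 * γε2) := by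
            intro j
            rw [Finset.sum_const, Finset.card_erase_of_mem (mem_univ j),
              Finset.card_univ, Fintype.card_fin, nsmul_eq_mul]
          rw [Finset.sum_congr rfl (fun j _ => hinner j), Finset.sum_const,
            Finset.card_univ, Fintype.card_fin, nsmul_eq_mul]
      _ = ((l : ℝ) ^ 2 - (l : ℝ)) * γb4 + 3 * ((l : ℝ) ^ 2 - (l : ℝ)) * γb2 * γε2 := by
          rw [hcast]; ring
  refine ⟨hmain1, ?_⟩
  -- second identity
  have hInt3 : Integrable (fun ω => (∑ j, (b ω + ε j ω) ^ 3) * (∑ j, (b ω + ε j ω))) ℙ := by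
    have heq : (fun ω => (∑ j, (b ω + ε j ω) ^ 3) * (∑ j, (b ω + ε j ω)))
        = fun ω => ∑ j : Fin l, ∑ k : Fin l, (b ω + ε j ω) ^ 3 * (b ω + ε k ω) := by
      funext ω; rw [Finset.sum_mul_sum]
    rw [heq]
    exact integrable_finset_sum _ fun j _ => integrable_finset_sum _ fun k _ => hintgr j k
  have hInt4 : Integrable (fun ω => ∑ j, (b ω + ε j ω) ^ 4) ℙ :=
    integrable_finset_sum _ fun j _ => he4 j
  have hsub : (∫ ω, ((∑ j, (b ω + ε j ω) ^ 3) * (∑ j, (b ω + ε j ω))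
        - ∑ j, (b ω + ε j ω) ^ 4))
      = (∫ ω, (∑ j, (b ω + ε j ω) ^ 3) * (∑ j, (b ω + ε j ω)))
        - ∫ ω, ∑ j, (b ω + ε j ω) ^ 4 := integral_sub hInt3 hInt4
  rw [← hsub, hmain1]
  have hl2 : (2 : ℝ) ≤ (l : ℝ) := by exact_mod_cast hl
  have hne : (l : ℝ) * ((l : ℝ) - 1) ≠ 0 := by nlinarith
  have hne' : (l : ℝ) - 1 ≠ 0 := by linarith
  field_simp
  ring
end
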